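/- A set partition π of [n] (with first block B_1, i.e., the block containing 1) is splitable if and only if there exists an element i ∈ B_1 with 2 ≤ i ≤ n such that π = π_{[i-1]} ∘ (π_{[i,n]} − i + 1). -/

import Mathlib

/-- A block of a set partition: a finite set of positive integers. -/
abbrev Block : Type := Finset ℕ

/-- The underlying set of a list of blocks (the union of all blocks). -/
def support (P : List Block) : Finset ℕ := P.foldr (· ∪ ·) ∅

/-- `P` is a set partition of `[n] = {1,…,n}`: a list of pairwise disjoint nonempty
blocks with union `{1,…,n}`, listed in increasing order of their minimal elements. -/
def IsPartition (n : ℕ) (P : List Block) : Prop :=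
  (∀ B ∈ P, B.Nonempty) ∧ List.Pairwise Disjoint P ∧
    support P = Finset.Icc 1 n ∧
    List.Chain' (fun B C : Block => B.min < C.min) P

/-- Add `m` to every element of every block: `σ + m`. -/
def shiftUp (m : ℕ) (P : List Block) : List Block := P.map fun B => B.image (· + m)

/-- Subtract `m` from every element of every block. -/
def shiftDown (m : ℕ) (P : List Block) : List Block := P.map fun B => B.image (· - m)

/-- The slash product `π | σ` where `π` is a partition of `[m]`. -/
def slash (m : ℕ) (P Q : List Block) : List Block := P ++ shiftUp m Q

/-- `P` is an atomic partition of `[n]`: it is not a slash product of two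
nonempty partitions. -/
def Atomic (n : ℕ) (P : List Block) : Prop :=
  ¬ ∃ (a b : ℕ) (σ τ : List Block), 0 < a ∧ 0 < b ∧ a + b = n ∧
      IsPartition a σ ∧ IsPartition b τ ∧ P = slash a σ τ

/-- The split product `π ∘ σ` where `π` is a partition of `[m]`. -/
def splitProd (m : ℕ) (P Q : List Block) : List Block :=
  List.zipWith (· ∪ ·) P (shiftUp m Q) ++ P.drop Q.length ++ (shiftUp m Q).drop P.length

/-- `P` is a splitable partition of `[n]`: a split product of two nonempty partitions. -/
def Splitable (n : ℕ) (P : List Block) : Prop :=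
  ∃ (a b : ℕ) (σ τ : List Block), 0 < a ∧ 0 < b ∧ a + b = n ∧
      IsPartition a σ ∧ IsPartition b τ ∧ P = splitProd a σ τ

/-- The minimum of a block (`0` for the empty block). -/
def blockMin (B : Block) : ℕ := WithTop.untopD 0 B.min

/-- The restriction `π_S`: the nonempty intersections `B ∩ S`, listed in
increasing order of their minimal elements. -/
def restrict (P : List Block) (S : Finset ℕ) : List Block :=
  (((P.map (· ∩ S)).filter fun B => decide B.Nonempty).mergeSort
    fun B C => decide (blockMin B ≤ blockMin C))

/-- The blocks from position `d` on have union equal to an upper part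
`{x_t, x_{t+1}, …, x_n}` of the underlying set. -/
def IsUpperSuffix (P : List Block) (d : ℕ) : Prop :=
  ∃ s ∈ support P, support (P.drop d) = (support P).filter (s ≤ ·)

instance (P : List Block) : DecidablePred (IsUpperSuffix P) := fun d => by
  unfold IsUpperSuffix; infer_instance

/-- `R(π)`: the longest proper-or-improper final segment `{B_r,…,B_k}` of the blocks
whose union is an upper part `{x_t,…,x_n}` of the underlying set. -/
def Rmap (P : List Block) : List Block :=
  P.drop (WithBot.unbotD 0 (((Finset.range P.length).filter fun d => IsUpperSuffix P d).max))

/-- `π = π_{[i-1]} ∘ (π_{[i,n]} − i + 1)`. -/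
def SplitsAt (n i : ℕ) (P : List Block) : Prop :=
  P = splitProd (i - 1) (restrict P (Finset.Icc 1 (i - 1)))
        (shiftDown (i - 1) (restrict P (Finset.Icc i n)))

instance (n : ℕ) (P : List Block) : DecidablePred fun i => SplitsAt n i P := fun i => by
  unfold SplitsAt; infer_instance

/-- The index `i` in the definition of `φ`: the smallest element of the first block
`B_1` such that `π = π_{[i-1]} ∘ (π_{[i,n]} − i + 1)`. -/
def phiI (n : ℕ) (P : List Block) : ℕ :=
  WithTop.untopD 0 (((P.headD ∅).filter fun i => 2 ≤ i ∧ SplitsAt n i P).min)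

/-- The index `j` in the definition of `φ`: the smallest element of the underlying
set of `R(π_{[i,n]})`. -/
def phiJ (n : ℕ) (P : List Block) : ℕ :=
  WithTop.untopD 0 ((support (Rmap (restrict P (Finset.Icc (phiI n P) n)))).min)

/-- The map `φ`: `φ(π) = π_{[j-1]} | (π_{[j,n]} − j + 1)`. -/
def phi (n : ℕ) (P : List Block) : List Block :=
  slash (phiJ n P - 1) (restrict P (Finset.Icc 1 (phiJ n P - 1)))
    (shiftDown (phiJ n P - 1) (restrict P (Finset.Icc (phiJ n P) n)))

/-- `σ_{[j-1]} = σ_{[i-1]} ∘ (σ_{[i,j-1]} − i + 1)`. -/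
def SplitsAtRes (j i : ℕ) (P : List Block) : Prop :=
  restrict P (Finset.Icc 1 (j - 1)) =
    splitProd (i - 1) (restrict P (Finset.Icc 1 (i - 1)))
      (shiftDown (i - 1) (restrict P (Finset.Icc i (j - 1))))

instance (j : ℕ) (P : List Block) : DecidablePred fun i => SplitsAtRes j i P := fun i => by
  unfold SplitsAtRes; infer_instance

open scoped Classical in
/-- The map `ψ`. Here `j` is the smallest element of the underlying set of `R(σ)`,
`r` is the (0-based) position of the first block of `R(σ)`, and in the splitable case
`i` is the smallest element of `B_1` with `σ_{[j-1]} = σ_{[i-1]} ∘ (σ_{[i,j-1]} − i + 1)`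
and `q` is the (0-based) position of the first block contained in `[i-1]`. -/
noncomputable def psi (n : ℕ) (P : List Block) : List Block :=
  let j := WithTop.untopD 0 ((support (Rmap P)).min)
  if Splitable (j - 1) (restrict P (Finset.Icc 1 (j - 1))) then
    let i := WithTop.untopD 0 (((P.headD ∅).filter fun i => 2 ≤ i ∧ SplitsAtRes j i P).min)
    let q := P.findIdx fun B => decide (B ⊆ Finset.Icc 1 (i - 1))
    let r := P.length - (Rmap P).length
    P.take q ++ (List.zipWith (· ∪ ·) ((P.drop q).take (r - q)) (P.drop r)
      ++ ((P.drop q).take (r - q)).drop (P.drop r).length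
      ++ (P.drop r).drop (r - q))
  else
    splitProd (j - 1) (restrict P (Finset.Icc 1 (j - 1)))
      (shiftDown (j - 1) (restrict P (Finset.Icc j n)))


section Aux

instance : IsTrans Block (fun B C : Block => B.min < C.min) :=
  ⟨fun _ _ _ h1 h2 => lt_trans h1 h2⟩

instance : IsAntisymm Block (fun B C : Block => B.min < C.min) :=
  ⟨fun _ _ h1 h2 => absurd (lt_trans h1 h2) (lt_irrefl _)⟩

lemma mem_support {P : List Block} {x : ℕ} : x ∈ support P ↔ ∃ B ∈ P, x ∈ B := by
  induction P with
  | nil => simp [support]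
  | cons B P ih =>
      show x ∈ B ∪ support P ↔ _
      simp [Finset.mem_union, ih]

lemma min_eq_blockMin {B : Block} (h : B.Nonempty) : B.min = (blockMin B : WithTop ℕ) := by
  obtain ⟨m, hm⟩ := Finset.min_of_nonempty h
  simp only [blockMin, hm]
  rfl

lemma blockMin_mem {B : Block} (h : B.Nonempty) : blockMin B ∈ B := by
  have := min_eq_blockMin h
  exact Finset.mem_of_min this

lemma blockMin_le {B : Block} {x : ℕ} (hx : x ∈ B) : blockMin B ≤ x := by
  have h : B.Nonempty := ⟨x, hx⟩
  have := Finset.min_le hx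
  rw [min_eq_blockMin h] at this
  exact WithTop.coe_le_coe.1 this

lemma min_lt_iff_blockMin_lt {B C : Block} (hB : B.Nonempty) (hC : C.Nonempty) :
    B.min < C.min ↔ blockMin B < blockMin C := by
  rw [min_eq_blockMin hB, min_eq_blockMin hC]
  exact_mod_cast Iff.rfl

lemma mem_restrict {P : List Block} {S : Finset ℕ} {B : Block} :
    B ∈ restrict P S ↔ B.Nonempty ∧ ∃ B' ∈ P, B' ∩ S = B := by
  unfold restrict
  rw [List.mem_mergeSort, List.mem_filter, List.mem_map]
  simp [and_comm]

lemma restrict_nonempty {P : List Block} {S : Finset ℕ} :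
    ∀ B ∈ restrict P S, B.Nonempty := fun _ hB => (mem_restrict.1 hB).1

lemma restrict_disjoint {P : List Block} {S : Finset ℕ}
    (hd : List.Pairwise Disjoint P) : List.Pairwise Disjoint (restrict P S) := by
  have h1 : List.Pairwise Disjoint (P.map (· ∩ S)) :=
    hd.map _ (fun a b hab =>
      Finset.disjoint_left.2 fun x hx hx' => Finset.disjoint_left.1 hab
        (Finset.mem_inter.1 hx).1 (Finset.mem_inter.1 hx').1)
  have h2 : List.Pairwise Disjoint ((P.map (· ∩ S)).filter fun B => decide B.Nonempty) :=
    h1.sublist List.filter_sublist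
  exact h2.perm (List.mergeSort_perm _ _).symm (fun h => h.symm)

lemma restrict_sorted {P : List Block} {S : Finset ℕ} :
    List.Pairwise (fun B C : Block => blockMin B ≤ blockMin C) (restrict P S) := by
  have := List.pairwise_mergeSort
    (le := fun B C : Block => decide (blockMin B ≤ blockMin C))
    (fun a b c hab hbc => by simp at *; omega)
    (fun a b => by simp; omega)
    ((P.map (· ∩ S)).filter fun B => decide B.Nonempty)
  refine this.imp ?_
  intro a b h
  simpa using h

lemma pairwise_min_lt_of {Q : List Block} (hne : ∀ B ∈ Q, B.Nonempty)
    (hd : List.Pairwise Disjoint Q)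
    (hs : List.Pairwise (fun B C : Block => blockMin B ≤ blockMin C) Q) :
    List.Pairwise (fun B C : Block => B.min < C.min) Q := by
  refine (hs.and hd).imp_of_mem ?_
  intro a b ha hb ⟨hle, hdis⟩
  have hA := hne a ha; have hB := hne b hb
  rw [min_lt_iff_blockMin_lt hA hB]
  rcases lt_or_eq_of_le hle with h | h
  · exact h
  · exfalso
    exact Finset.disjoint_left.1 hdis (blockMin_mem hA) (h ▸ blockMin_mem hB)

lemma restrict_pairwise_min_lt {P : List Block} {S : Finset ℕ}
    (hd : List.Pairwise Disjoint P) :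
    List.Pairwise (fun B C : Block => B.min < C.min) (restrict P S) :=
  pairwise_min_lt_of restrict_nonempty (restrict_disjoint hd) restrict_sorted

lemma mem_support_restrict {P : List Block} {S : Finset ℕ} {x : ℕ} :
    x ∈ support (restrict P S) ↔ x ∈ support P ∧ x ∈ S := by
  rw [mem_support]
  constructor
  · rintro ⟨B, hB, hx⟩
    obtain ⟨-, B', hB', rfl⟩ := mem_restrict.1 hB
    rw [Finset.mem_inter] at hx
    exact ⟨mem_support.2 ⟨B', hB', hx.1⟩, hx.2⟩
  · rintro ⟨hx, hxS⟩
    obtain ⟨B, hB, hxB⟩ := mem_support.1 hx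
    refine ⟨B ∩ S, mem_restrict.2 ⟨⟨x, Finset.mem_inter.2 ⟨hxB, hxS⟩⟩, B, hB, rfl⟩,
      Finset.mem_inter.2 ⟨hxB, hxS⟩⟩

lemma eq_of_pairwise_min_lt {P Q : List Block}
    (hP : List.Pairwise (fun B C : Block => B.min < C.min) P)
    (hQ : List.Pairwise (fun B C : Block => B.min < C.min) Q)
    (h : ∀ B, B ∈ P ↔ B ∈ Q) : P = Q := by
  have nP : P.Nodup := hP.imp (fun {a b} hab => fun hEq => absurd (hEq ▸ hab) (lt_irrefl _))
  have nQ : Q.Nodup := hQ.imp (fun {a b} hab => fun hEq => absurd (hEq ▸ hab) (lt_irrefl _))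
  exact List.Perm.eq_of_pairwise (fun _ _ _ _ h1 h2 => absurd (lt_trans h1 h2) (lt_irrefl _)) hP hQ
    ((List.perm_ext_iff_of_nodup nP nQ).2 h)

lemma blockMin_image_sub {B : Block} {m : ℕ} (h : B.Nonempty) :
    blockMin (B.image (· - m)) = blockMin B - m := by
  apply le_antisymm
  · exact blockMin_le (Finset.mem_image_of_mem _ (blockMin_mem h))
  · have hm : blockMin (B.image (· - m)) ∈ B.image (· - m) := blockMin_mem (h.image _)
    obtain ⟨x, hx, hxe⟩ := Finset.mem_image.1 hm
    rw [← hxe]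
    exact Nat.sub_le_sub_right (blockMin_le hx) m

lemma blockMin_image_add {B : Block} {m : ℕ} (h : B.Nonempty) :
    blockMin (B.image (· + m)) = blockMin B + m := by
  apply le_antisymm
  · exact blockMin_le (Finset.mem_image_of_mem _ (blockMin_mem h))
  · have hm : blockMin (B.image (· + m)) ∈ B.image (· + m) := blockMin_mem (h.image _)
    obtain ⟨x, hx, hxe⟩ := Finset.mem_image.1 hm
    rw [← hxe]
    exact Nat.add_le_add_right (blockMin_le hx) m

lemma isPartition_restrict_initial {n m : ℕ} {P : List Block}
    (hP : IsPartition n P) (hm : m ≤ n) :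
    IsPartition m (restrict P (Finset.Icc 1 m)) := by
  obtain ⟨hne, hd, hsup, hch⟩ := hP
  refine ⟨restrict_nonempty, restrict_disjoint hd, ?_,
    List.isChain_iff_pairwise.2 (restrict_pairwise_min_lt hd)⟩
  ext x
  rw [mem_support_restrict, hsup]
  simp only [Finset.mem_Icc]
  omega

lemma shiftDown_isPartition {m n : ℕ} {Q : List Block}
    (hne : ∀ B ∈ Q, B.Nonempty) (hd : List.Pairwise Disjoint Q)
    (hsup : support Q = Finset.Icc (m + 1) n)
    (hpw : List.Pairwise (fun B C : Block => B.min < C.min) Q) :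
    IsPartition (n - m) (shiftDown m Q) := by
  have lb : ∀ B ∈ Q, ∀ x ∈ B, m + 1 ≤ x ∧ x ≤ n := by
    intro B hB x hx
    have : x ∈ support Q := mem_support.2 ⟨B, hB, hx⟩
    rw [hsup, Finset.mem_Icc] at this
    exact this
  refine ⟨?_, ?_, ?_, ?_⟩
  · intro B hB
    obtain ⟨B', hB', rfl⟩ := List.mem_map.1 hB
    exact (hne B' hB').image _
  · rw [shiftDown, List.pairwise_map]
    refine hd.imp_of_mem ?_
    intro a b ha hb hab
    refine Finset.disjoint_left.2 ?_
    intro y hy hy'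
    obtain ⟨x, hx, hxe⟩ := Finset.mem_image.1 hy
    obtain ⟨x', hx', hxe'⟩ := Finset.mem_image.1 hy'
    have h1 := (lb a ha x hx).1
    have h2 := (lb b hb x' hx').1
    have : x = x' := by omega
    exact Finset.disjoint_left.1 hab hx (this ▸ hx')
  · ext y
    rw [mem_support, Finset.mem_Icc]
    constructor
    · rintro ⟨B, hB, hy⟩
      obtain ⟨B', hB', rfl⟩ := List.mem_map.1 hB
      obtain ⟨x, hx, rfl⟩ := Finset.mem_image.1 hy
      have := lb B' hB' x hx
      omega
    · rintro ⟨h1, h2⟩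
      have hy : y + m ∈ support Q := by
        rw [hsup, Finset.mem_Icc]; omega
      obtain ⟨B, hB, hyB⟩ := mem_support.1 hy
      exact ⟨B.image (· - m), List.mem_map.2 ⟨B, hB, rfl⟩,
        Finset.mem_image.2 ⟨y + m, hyB, by omega⟩⟩
  · refine List.isChain_iff_pairwise.2 ?_
    rw [shiftDown, List.pairwise_map]
    refine hpw.imp_of_mem ?_
    intro a b ha hb hab
    have hA := hne a ha; have hB := hne b hb
    rw [min_lt_iff_blockMin_lt hA hB] at hab
    rw [min_lt_iff_blockMin_lt (hA.image _) (hB.image _),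
      blockMin_image_sub hA, blockMin_image_sub hB]
    have h2 := (lb b hb _ (blockMin_mem hB)).1
    omega

lemma block_subset_support {P : List Block} {B : Block} (hB : B ∈ P) : B ⊆ support P :=
  fun x hx => mem_support.2 ⟨B, hB, hx⟩

lemma one_mem_head {n : ℕ} {P : List Block} (hP : IsPartition n P) (hn : 0 < n) :
    1 ∈ P.headD ∅ := by
  obtain ⟨hne, hd, hsup, hch⟩ := hP
  have h1 : (1 : ℕ) ∈ support P := by rw [hsup, Finset.mem_Icc]; omega
  obtain ⟨B, hB, h1B⟩ := mem_support.1 h1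
  obtain ⟨H, rest, rfl⟩ : ∃ H rest, P = H :: rest := by
    cases P with
    | nil => simp at hB
    | cons H rest => exact ⟨H, rest, rfl⟩
  simp only [List.headD_cons]
  rcases List.mem_cons.1 hB with rfl | hBr
  · exact h1B
  · exfalso
    have hHB : H.min < B.min := by
      have := List.isChain_iff_pairwise.1 hch
      exact (List.pairwise_cons.1 this).1 B hBr
    have hHne : H.Nonempty := hne H (by simp)
    have hBne : B.Nonempty := hne B hB
    rw [min_lt_iff_blockMin_lt hHne hBne] at hHB
    have h1' : 1 ≤ blockMin H := by
      have : blockMin H ∈ support (H :: rest) := mem_support.2 ⟨H, by simp, blockMin_mem hHne⟩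
      rw [hsup, Finset.mem_Icc] at this
      omega
    have := blockMin_le h1B
    omega

end Aux

/-- A set partition `π` of `[n]` (with first block `B_1`, the block
containing `1`, i.e. the head of the list) is splitable if and only if there exists
`i ∈ B_1` with `2 ≤ i ≤ n` such that `π = π_{[i-1]} ∘ (π_{[i,n]} − i + 1)`. -/
theorem splitable_iff_exists_splitsAt (n : ℕ) (P : List Block) (hP : IsPartition n P) :
    Splitable n P ↔ ∃ i ∈ P.headD ∅, 2 ≤ i ∧ i ≤ n ∧ SplitsAt n i P := by
  constructor
  · rintro ⟨a, b, σ, τ, ha, hb, hab, hσ, hτ, hPe⟩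
    subst hab
    -- basic facts
    have hσsub : ∀ B ∈ σ, B ⊆ Finset.Icc 1 a := fun B hB =>
      (block_subset_support hB).trans (by rw [hσ.2.2.1])
    have hτsub : ∀ B ∈ τ, B ⊆ Finset.Icc 1 b := fun B hB =>
      (block_subset_support hB).trans (by rw [hτ.2.2.1])
    set sτ := shiftUp a τ with hsτdef
    have hsl : sτ.length = τ.length := by simp [hsτdef, shiftUp]
    have hsτne : ∀ C ∈ sτ, C.Nonempty := by
      intro C hC
      obtain ⟨C', hC', rfl⟩ := List.mem_map.1 hC
      exact (hτ.1 C' hC').image _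
    have hsτsub : ∀ C ∈ sτ, C ⊆ Finset.Icc (a + 1) (a + b) := by
      intro C hC x hx
      obtain ⟨C', hC', rfl⟩ := List.mem_map.1 hC
      obtain ⟨y, hy, rfl⟩ := Finset.mem_image.1 hx
      have := Finset.mem_Icc.1 (hτsub C' hC' hy)
      rw [Finset.mem_Icc]; omega
    have hpwσ : List.Pairwise (fun B C : Block => B.min < C.min) σ :=
      List.isChain_iff_pairwise.1 hσ.2.2.2
    have hpwsτ : List.Pairwise (fun B C : Block => B.min < C.min) sτ := by
      rw [hsτdef, shiftUp, List.pairwise_map]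
      refine (List.isChain_iff_pairwise.1 hτ.2.2.2).imp_of_mem ?_
      intro x y hx hy hxy
      have hX := hτ.1 x hx; have hY := hτ.1 y hy
      rw [min_lt_iff_blockMin_lt hX hY] at hxy
      rw [min_lt_iff_blockMin_lt (hX.image _) (hY.image _),
        blockMin_image_add hX, blockMin_image_add hY]
      omega
    have memP : ∀ B' : Block, B' ∈ P ↔
        B' ∈ List.zipWith (· ∪ ·) σ sτ ∨ B' ∈ σ.drop τ.length ∨ B' ∈ sτ.drop σ.length := by
      intro B'
      rw [hPe]
      simp [splitProd, List.mem_append, hsτdef, or_assoc]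
    have einter1 : ∀ C ∈ sτ, C ∩ Finset.Icc 1 a = ∅ := by
      intro C hC
      ext x
      simp only [Finset.mem_inter, Finset.mem_Icc, Finset.notMem_empty, iff_false, not_and]
      intro hx
      have := Finset.mem_Icc.1 (hsτsub C hC hx)
      omega
    have einter2 : ∀ B ∈ σ, B ∩ Finset.Icc (a + 1) (a + b) = ∅ := by
      intro B hB
      ext x
      simp only [Finset.mem_inter, Finset.mem_Icc, Finset.notMem_empty, iff_false, not_and]
      intro hx
      have := Finset.mem_Icc.1 (hσsub B hB hx)
      omega
    -- identity 1 : restrict P (Icc 1 a) = σ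
    have key1 : restrict P (Finset.Icc 1 a) = σ := by
      apply eq_of_pairwise_min_lt (restrict_pairwise_min_lt hP.2.1) hpwσ
      intro B
      rw [mem_restrict]
      constructor
      · rintro ⟨hBne, B', hB', rfl⟩
        rcases (memP B').1 hB' with h | h | h
        · obtain ⟨idx, hidx, hget⟩ := List.mem_iff_getElem.1 h
          rw [List.length_zipWith] at hidx
          have hik : idx < σ.length := lt_of_lt_of_le hidx (min_le_left _ _)
          have hil : idx < sτ.length := lt_of_lt_of_le hidx (min_le_right _ _)
          rw [List.getElem_zipWith] at hget
          have hs1 : σ[idx] ∈ σ := List.getElem_mem _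
          have hs2 : sτ[idx] ∈ sτ := List.getElem_mem _
          rw [← hget, Finset.union_inter_distrib_right,
            Finset.inter_eq_left.2 (hσsub _ hs1), einter1 _ hs2, Finset.union_empty]
          exact hs1
        · have hB'σ : B' ∈ σ := List.mem_of_mem_drop h
          rwa [Finset.inter_eq_left.2 (hσsub _ hB'σ)]
        · exfalso
          have hB'sτ : B' ∈ sτ := List.mem_of_mem_drop h
          rw [einter1 _ hB'sτ] at hBne
          exact Finset.not_nonempty_empty hBne
      · intro hB
        refine ⟨hσ.1 B hB, ?_⟩
        obtain ⟨idx, hidx, hget⟩ := List.mem_iff_getElem.1 hB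
        by_cases hil : idx < τ.length
        · have hil' : idx < sτ.length := by omega
          refine ⟨σ[idx] ∪ sτ[idx], ?_, ?_⟩
          · refine (memP _).2 (Or.inl ?_)
            have hz : idx < (List.zipWith (· ∪ ·) σ sτ).length := by
              rw [List.length_zipWith]; omega
            have := List.getElem_mem hz
            rwa [List.getElem_zipWith] at this
          · rw [Finset.union_inter_distrib_right,
              Finset.inter_eq_left.2 (hσsub _ (List.getElem_mem hidx)),
              einter1 _ (List.getElem_mem hil'), Finset.union_empty, hget]
        · refine ⟨B, (memP _).2 (Or.inr (Or.inl ?_)),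
            Finset.inter_eq_left.2 (hσsub _ hB)⟩
          have h1 : idx - τ.length < (σ.drop τ.length).length := by
            rw [List.length_drop]; omega
          have h2 : (σ.drop τ.length)[idx - τ.length] = B := by
            rw [List.getElem_drop, ← hget]
            congr 1
            omega
          exact List.mem_iff_getElem.2 ⟨_, h1, h2⟩
    -- identity 2 : restrict P (Icc (a+1) (a+b)) = sτ
    have key2 : restrict P (Finset.Icc (a + 1) (a + b)) = sτ := by
      apply eq_of_pairwise_min_lt (restrict_pairwise_min_lt hP.2.1) hpwsτ
      intro B
      rw [mem_restrict]
      constructor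
      · rintro ⟨hBne, B', hB', rfl⟩
        rcases (memP B').1 hB' with h | h | h
        · obtain ⟨idx, hidx, hget⟩ := List.mem_iff_getElem.1 h
          rw [List.length_zipWith] at hidx
          have hik : idx < σ.length := lt_of_lt_of_le hidx (min_le_left _ _)
          have hil : idx < sτ.length := lt_of_lt_of_le hidx (min_le_right _ _)
          rw [List.getElem_zipWith] at hget
          have hs1 : σ[idx] ∈ σ := List.getElem_mem _
          have hs2 : sτ[idx] ∈ sτ := List.getElem_mem _
          rw [← hget, Finset.union_inter_distrib_right,
            Finset.inter_eq_left.2 (hsτsub _ hs2), einter2 _ hs1, Finset.empty_union]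
          exact hs2
        · exfalso
          have hB'σ : B' ∈ σ := List.mem_of_mem_drop h
          rw [einter2 _ hB'σ] at hBne
          exact Finset.not_nonempty_empty hBne
        · have hB'sτ : B' ∈ sτ := List.mem_of_mem_drop h
          rwa [Finset.inter_eq_left.2 (hsτsub _ hB'sτ)]
      · intro hB
        refine ⟨hsτne B hB, ?_⟩
        obtain ⟨idx, hidx, hget⟩ := List.mem_iff_getElem.1 hB
        by_cases hik : idx < σ.length
        · refine ⟨σ[idx] ∪ sτ[idx], ?_, ?_⟩
          · refine (memP _).2 (Or.inl ?_)
            have hz : idx < (List.zipWith (· ∪ ·) σ sτ).length := by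
              rw [List.length_zipWith]; omega
            have := List.getElem_mem hz
            rwa [List.getElem_zipWith] at this
          · rw [Finset.union_inter_distrib_right,
              Finset.inter_eq_left.2 (hsτsub _ (List.getElem_mem hidx)),
              einter2 _ (List.getElem_mem hik), Finset.empty_union, hget]
        · refine ⟨B, (memP _).2 (Or.inr (Or.inr ?_)),
            Finset.inter_eq_left.2 (hsτsub _ hB)⟩
          have h1 : idx - σ.length < (sτ.drop σ.length).length := by
            rw [List.length_drop]; omega
          have h2 : (sτ.drop σ.length)[idx - σ.length] = B := by
            rw [List.getElem_drop, ← hget]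
            congr 1
            omega
          exact List.mem_iff_getElem.2 ⟨_, h1, h2⟩
    -- identity 3 : shiftDown a sτ = τ
    have key3 : shiftDown a sτ = τ := by
      rw [hsτdef, shiftDown, shiftUp, List.map_map]
      have hid : ((fun B : Block => B.image (· - a)) ∘ fun B : Block => B.image (· + a)) = id := by
        funext B
        simp only [Function.comp_apply, Finset.image_image, id_eq]
        have : ((· - a) ∘ (· + a)) = (id : ℕ → ℕ) := by
          funext x; simp
        rw [this, Finset.image_id]
      rw [hid, List.map_id]
    -- conclude
    refine ⟨a + 1, ?_, by omega, by omega, ?_⟩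
    · -- a + 1 ∈ head block
      have hτex : ∃ C t, τ = C :: t := by
        cases τ with
        | nil =>
            exfalso
            have h1 : (1 : ℕ) ∈ support ([] : List Block) := by
              rw [hτ.2.2.1, Finset.mem_Icc]; omega
            simp [support] at h1
        | cons C t => exact ⟨C, t, rfl⟩
      have hσex : ∃ B t, σ = B :: t := by
        cases σ with
        | nil =>
            exfalso
            have h1 : (1 : ℕ) ∈ support ([] : List Block) := by
              rw [hσ.2.2.1, Finset.mem_Icc]; omega
            simp [support] at h1
        | cons B t => exact ⟨B, t, rfl⟩
      obtain ⟨Cτ, τt, rfl⟩ := hτex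
      obtain ⟨Bσ, σt, rfl⟩ := hσex
      have h1C : 1 ∈ Cτ := by
        have := one_mem_head hτ hb
        simpa using this
      rw [hPe]
      simp only [splitProd, shiftUp, List.map_cons, List.zipWith_cons_cons,
        List.cons_append, List.headD_cons]
      refine Finset.mem_union_right _ (Finset.mem_image.2 ⟨1, h1C, by omega⟩)
    · unfold SplitsAt
      have ha1 : a + 1 - 1 = a := by omega
      rw [ha1, key1, key2, key3, ← hPe]
  · rintro ⟨i, hiB, h2i, hin, hsplit⟩
    refine ⟨i - 1, n - (i - 1),
      restrict P (Finset.Icc 1 (i - 1)),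
      shiftDown (i - 1) (restrict P (Finset.Icc i n)),
      by omega, by omega, by omega,
      isPartition_restrict_initial hP (by omega), ?_, hsplit⟩
    apply shiftDown_isPartition restrict_nonempty (restrict_disjoint hP.2.1) ?_
      (restrict_pairwise_min_lt hP.2.1)
    ext x
    rw [mem_support_restrict, hP.2.2.1]
    simp only [Finset.mem_Icc]
    omega
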